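/- arXiv:2509.20606 — 3 statements merged into one kernel-verified Lean document; each statement's English description precedes it below -/
import Mathlib

section
/- Let k be a field, and let A : Fin n → (Fin (d+1) → ℤ) be a finite point configuration (the columns of an integer matrix). Let φ* : MvPolynomial (Fin n) k →ₐ[k] AddMonoidAlgebra k (Fin (d+1) → ℤ) be the k-algebra homomorphism sending the variable X_i to the Laurent monomial with exponent vector A i (i.e. to AddMonoidAlgebra.single (A i) 1). Then the kernel of φ* equals the ideal generated by the binomials X^u − X^v, where u, v : Fin n →₀ ℕ range over exponent vectors satisfying ∑_i u_i • A i = ∑_i v_i • A i (here X^u denotes the monomial MvPolynomial.monomial u 1). -/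
open MvPolynomial Finset

lemma aeval_monomial_single' {k : Type*} [Field k] {n d : ℕ}
    (A : Fin n → (Fin (d + 1) → ℤ)) (u : Fin n →₀ ℕ) (c : k) :
    MvPolynomial.aeval (fun i : Fin n => AddMonoidAlgebra.single (A i) (1 : k))
      (MvPolynomial.monomial u c)
      = AddMonoidAlgebra.single (∑ i, u i • A i) c := by
  rw [MvPolynomial.aeval_monomial]
  have h1 : (Finsupp.prod u fun i m => (AddMonoidAlgebra.single (A i) (1 : k)) ^ m)
      = AddMonoidAlgebra.single (∑ i, u i • A i) 1 := by
    rw [Finsupp.prod]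
    simp_rw [AddMonoidAlgebra.single_pow, one_pow]
    rw [AddMonoidAlgebra.prod_single, Finset.prod_const_one]
    congr 1
    refine Finset.sum_subset (Finset.subset_univ _) ?_
    intro i _ hi
    simp [Finsupp.notMem_support_iff.mp hi]
  rw [h1, AddMonoidAlgebra.coe_algebraMap]
  simp [AddMonoidAlgebra.single_mul_single]

lemma ker_sub' {k : Type*} [Field k] {n d : ℕ} (A : Fin n → (Fin (d + 1) → ℤ)) :
    ∀ N (f : MvPolynomial (Fin n) k), f.support.card ≤ N →
      MvPolynomial.aeval (fun i : Fin n => AddMonoidAlgebra.single (A i) (1 : k)) f = 0 →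
      f ∈ Ideal.span {f : MvPolynomial (Fin n) k |
        ∃ u v : Fin n →₀ ℕ,
          (∑ i, u i • A i) = (∑ i, v i • A i) ∧
          f = MvPolynomial.monomial u (1 : k) - MvPolynomial.monomial v (1 : k)} := by
  intro N
  induction N with
  | zero =>
    intro f hcard _
    have : f = 0 := by
      rwa [Nat.le_zero, Finset.card_eq_zero, MvPolynomial.support_eq_empty] at hcard
    rw [this]; exact Ideal.zero_mem _
  | succ N ih =>
    intro f hcard hf
    by_cases hf0 : f = 0
    · rw [hf0]; exact Ideal.zero_mem _
    · obtain ⟨u, hu⟩ := (MvPolynomial.support_nonempty.mpr hf0)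
      set φ : MvPolynomial (Fin n) k →ₐ[k] AddMonoidAlgebra k (Fin (d+1) → ℤ) :=
        MvPolynomial.aeval (fun i : Fin n => AddMonoidAlgebra.single (A i) (1 : k)) with hφ
      set w : Fin (d+1) → ℤ := ∑ i, u i • A i with hw
      have hrep : φ f = ∑ m ∈ f.support,
          AddMonoidAlgebra.single (∑ i, m i • A i) (f.coeff m) := by
        conv_lhs => rw [f.as_sum]
        rw [map_sum]
        exact Finset.sum_congr rfl fun m _ => aeval_monomial_single' A m _
      have hfiber : ∑ m ∈ f.support.filter (fun m => (∑ i, m i • A i) = w),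
          f.coeff m = 0 := by
        have h2 : (φ f).coeff w = 0 := by rw [hf]; rfl
        rw [hrep, AddMonoidAlgebra.coeff_sum, Finsupp.finset_sum_apply] at h2
        rw [← h2, Finset.sum_filter]
        refine Finset.sum_congr rfl fun m _ => ?_
        rw [AddMonoidAlgebra.coeff_single_apply]
      have humem : u ∈ f.support.filter (fun m => (∑ i, m i • A i) = w) := by
        simp [Finset.mem_filter, hu, hw]
      have hcu : f.coeff u ≠ 0 := MvPolynomial.mem_support_iff.mp hu
      obtain ⟨v, hvmem, hvu⟩ : ∃ v ∈ f.support.filter (fun m => (∑ i, m i • A i) = w),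
          v ≠ u := by
        by_contra h
        push_neg at h
        have hs : f.support.filter (fun m => (∑ i, m i • A i) = w) = {u} :=
          Finset.eq_singleton_iff_unique_mem.mpr ⟨humem, h⟩
        rw [hs, Finset.sum_singleton] at hfiber
        exact hcu hfiber
      obtain ⟨hvsup, hvw⟩ := Finset.mem_filter.mp hvmem
      set c := f.coeff u with hc
      set b : MvPolynomial (Fin n) k :=
        MvPolynomial.monomial u (1 : k) - MvPolynomial.monomial v (1 : k) with hb
      have hbmem : b ∈ Ideal.span {f : MvPolynomial (Fin n) k |
          ∃ u v : Fin n →₀ ℕ,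
            (∑ i, u i • A i) = (∑ i, v i • A i) ∧
            f = MvPolynomial.monomial u (1 : k) - MvPolynomial.monomial v (1 : k)} :=
        Ideal.subset_span ⟨u, v, by rw [← hw, hvw], rfl⟩
      set g : MvPolynomial (Fin n) k := f - c • b with hg
      have hφb : φ b = 0 := by
        rw [hb, map_sub, hφ]
        rw [aeval_monomial_single', aeval_monomial_single', ← hw, hvw, sub_self]
      have hφg : φ g = 0 := by
        rw [hg, map_sub, hf, map_smul, hφb, smul_zero, sub_zero]
      have hsub : g.support ⊆ f.support.erase u := by
        intro m hm
        have hm' := MvPolynomial.mem_support_iff.mp hm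
        have hmu : m ≠ u := by
          rintro rfl
          apply hm'
          rw [hg, hb]
          simp [MvPolynomial.coeff_sub, MvPolynomial.coeff_smul,
            MvPolynomial.coeff_monomial, hvu, hc]
        rw [Finset.mem_erase]
        refine ⟨hmu, ?_⟩
        by_cases hmv : m = v
        · exact hmv ▸ hvsup
        · apply MvPolynomial.mem_support_iff.mpr
          intro h0
          apply hm'
          rw [hg, hb]
          have h1 : u ≠ m := Ne.symm hmu
          have h2 : v ≠ m := fun h => hmv h.symm
          simp [MvPolynomial.coeff_sub, MvPolynomial.coeff_smul,
            MvPolynomial.coeff_monomial, h1, h2, h0]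
      have hcard' : g.support.card ≤ N := by
        have h1 : g.support.card ≤ (f.support.erase u).card := Finset.card_le_card hsub
        have h2 : (f.support.erase u).card < f.support.card :=
          Finset.card_erase_lt_of_mem hu
        omega
      have hgmem := ih g hcard' hφg
      have hfeq : f = g + c • b := by rw [hg]; ring
      rw [hfeq]
      exact Ideal.add_mem _ hgmem (by
        rw [MvPolynomial.smul_eq_C_mul]
        exact Ideal.mul_mem_left _ _ hbmem)

/-- The toric ideal of a point configuration `A : Fin n → (Fin (d+1) → ℤ)`, i.e. the kernel of
the `k`-algebra map `k[x_1,…,x_n] → k[y^{±}]` sending `X i` to the Laurent monomial `y^{A i}`,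
equals the binomial ideal `⟨X^u − X^v : A u = A v⟩`. -/
theorem toric_ideal_eq_binomial_span (k : Type*) [Field k] (n d : ℕ)
    (A : Fin n → (Fin (d + 1) → ℤ)) :
    RingHom.ker (MvPolynomial.aeval
        (fun i : Fin n => AddMonoidAlgebra.single (A i) (1 : k)) :
      MvPolynomial (Fin n) k →ₐ[k] AddMonoidAlgebra k (Fin (d + 1) → ℤ)) =
    Ideal.span {f : MvPolynomial (Fin n) k |
      ∃ u v : Fin n →₀ ℕ,
        (∑ i, u i • A i) = (∑ i, v i • A i) ∧
        f = MvPolynomial.monomial u (1 : k) - MvPolynomial.monomial v (1 : k)} := by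
  apply le_antisymm
  · intro f hf
    exact ker_sub' A f.support.card f le_rfl (RingHom.mem_ker.mp hf)
  · rw [Ideal.span_le]
    rintro f ⟨u, v, huv, rfl⟩
    rw [SetLike.mem_coe, RingHom.mem_ker, map_sub,
      aeval_monomial_single', aeval_monomial_single', huv, sub_self]
end

section
/- Let k be a field and let A : Fin n → (Fin (d+1) → ℤ) be a finite point configuration. Then the ideal of MvPolynomial (Fin n) k generated by the binomials X^u − X^v, where u, v : Fin n →₀ ℕ satisfy ∑_i u_i • A i = ∑_i v_i • A i, is a prime ideal. Equivalently, the kernel of the k-algebra homomorphism MvPolynomial (Fin n) k →ₐ[k] AddMonoidAlgebra k (Fin (d+1) → ℤ) sending X_i to the Laurent monomial with exponent A i is a prime ideal. -/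
open MvPolynomial

/-- The toric ideal of a point configuration `A : Fin n → (Fin (d+1) → ℤ)` is prime: the
binomial ideal `⟨X^u − X^v : A u = A v⟩` is a prime ideal; equivalently, the kernel of the
`k`-algebra map `k[x_1,…,x_n] → k[y^{±}]`, `X i ↦ y^{A i}`, is a prime ideal. -/
theorem toric_ideal_isPrime (k : Type*) [Field k] (n d : ℕ)
    (A : Fin n → (Fin (d + 1) → ℤ)) :
    (Ideal.span {f : MvPolynomial (Fin n) k |
      ∃ u v : Fin n →₀ ℕ,
        (∑ i, u i • A i) = (∑ i, v i • A i) ∧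
        f = MvPolynomial.monomial u (1 : k) - MvPolynomial.monomial v (1 : k)}).IsPrime ∧
    (RingHom.ker (MvPolynomial.aeval
        (fun i : Fin n => AddMonoidAlgebra.single (A i) (1 : k)) :
      MvPolynomial (Fin n) k →ₐ[k] AddMonoidAlgebra k (Fin (d + 1) → ℤ))).IsPrime := by
  haveI : IsDomain (AddMonoidAlgebra k (Fin (d + 1) → ℤ)) := NoZeroDivisors.to_isDomain _
  set φ : MvPolynomial (Fin n) k →ₐ[k] AddMonoidAlgebra k (Fin (d + 1) → ℤ) :=
    MvPolynomial.aeval (fun i : Fin n => AddMonoidAlgebra.single (A i) (1 : k)) with hφ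
  set L : (Fin n →₀ ℕ) → (Fin (d + 1) → ℤ) := fun u => ∑ i, u i • A i with hL
  set S : Set (MvPolynomial (Fin n) k) := {f : MvPolynomial (Fin n) k |
      ∃ u v : Fin n →₀ ℕ, L u = L v ∧
        f = MvPolynomial.monomial u (1 : k) - MvPolynomial.monomial v (1 : k)} with hS
  -- computation of φ on monomials
  have hmono : ∀ (u : Fin n →₀ ℕ) (c : k),
      φ (monomial u c) = AddMonoidAlgebra.single (L u) c := by
    intro u c
    rw [hφ, aeval_monomial, Finsupp.prod]
    have h1 : ∀ i ∈ u.support,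
        (AddMonoidAlgebra.single (A i) (1 : k)) ^ u i
          = AddMonoidAlgebra.single (u i • A i) (1 : k) := by
      intro i _
      rw [AddMonoidAlgebra.single_pow, one_pow]
    rw [Finset.prod_congr rfl h1, AddMonoidAlgebra.prod_single, Finset.prod_const_one]
    have h2 : (∑ i ∈ u.support, u i • A i) = L u := by
      rw [hL]
      exact Finset.sum_subset (Finset.subset_univ _)
        (fun i _ hi => by simp [Finsupp.notMem_support_iff.mp hi])
    rw [h2, ← Algebra.smul_def, AddMonoidAlgebra.smul_single', mul_one]
  -- φ of a polynomial as a sum of singles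
  have hsum : ∀ f : MvPolynomial (Fin n) k,
      φ f = ∑ u ∈ f.support, AddMonoidAlgebra.single (L u) (coeff u f) := by
    intro f
    conv_lhs => rw [f.as_sum, map_sum]
    exact Finset.sum_congr rfl fun u _ => hmono u _
  -- S ⊆ ker φ
  have hSker : S ⊆ (RingHom.ker φ : Ideal (MvPolynomial (Fin n) k)) := by
    rintro f ⟨u, v, huv, rfl⟩
    simp only [SetLike.mem_coe, RingHom.mem_ker, map_sub, hmono, huv, sub_self]
  -- ker φ ⊆ span S, by strong induction on support card
  have hker' : ∀ N (f : MvPolynomial (Fin n) k), f.support.card = N → φ f = 0 →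
      f ∈ Ideal.span S := by
    intro N
    induction N using Nat.strong_induction_on with
    | _ N ih =>
      intro f hn hf
      by_cases h0 : f = 0
      · simp [h0]
      · obtain ⟨u, hu⟩ := f.support.nonempty_of_ne_empty (by
          simpa [MvPolynomial.support_eq_empty] using h0)
        have hcu : coeff u f ≠ 0 := MvPolynomial.mem_support_iff.mp hu
        -- evaluate φ f at L u
        have heval : ∑ w ∈ f.support.filter (fun w => L w = L u), coeff w f = 0 := by
          have h2 : (0 : (Fin (d + 1) → ℤ) →₀ k)
              = ∑ w ∈ f.support, Finsupp.single (L w) (coeff w f) := by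
            exact (congrArg AddMonoidAlgebra.coeff (hf.symm.trans (hsum f))).trans
              (AddMonoidAlgebra.coeff_sum _ _)
          have h3 := Finsupp.ext_iff.mp h2.symm (L u)
          rw [Finsupp.finset_sum_apply] at h3
          rw [Finset.sum_filter]
          simpa [Finsupp.single_apply] using h3
        -- find v ≠ u with L v = L u in support
        have hvex : ∃ v ∈ f.support.filter (fun w => L w = L u), v ≠ u := by
          by_contra hcon
          push_neg at hcon
          have : f.support.filter (fun w => L w = L u) = {u} := by
            apply Finset.eq_singleton_iff_unique_mem.mpr
            exact ⟨Finset.mem_filter.mpr ⟨hu, rfl⟩, hcon⟩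
          rw [this, Finset.sum_singleton] at heval
          exact hcu heval
        obtain ⟨v, hvmem, hvu⟩ := hvex
        obtain ⟨hvsupp, hLv⟩ := Finset.mem_filter.mp hvmem
        set b : MvPolynomial (Fin n) k := monomial u (1 : k) - monomial v (1 : k) with hb
        have hbS : b ∈ S := ⟨u, v, hLv.symm, rfl⟩
        set g : MvPolynomial (Fin n) k := f - coeff u f • b with hg
        have hgker : φ g = 0 := by
          rw [hg, map_sub, map_smul, hf, hb, map_sub, hmono, hmono, hLv, sub_self,
            smul_zero, sub_zero]
        have hgsupp : g.support ⊆ f.support.erase u := by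
          intro w hw
          have hwc : coeff w g ≠ 0 := MvPolynomial.mem_support_iff.mp hw
          rw [hg, hb] at hwc
          simp only [coeff_sub, coeff_smul, coeff_monomial, smul_eq_mul] at hwc
          rcases eq_or_ne w u with rfl | hwu
          · exact absurd (by simp [if_neg hvu]) hwc
          · refine Finset.mem_erase.mpr ⟨hwu, MvPolynomial.mem_support_iff.mpr ?_⟩
            rcases eq_or_ne w v with rfl | hwv
            · exact MvPolynomial.mem_support_iff.mp hvsupp
            · intro hwz
              apply hwc
              simp [hwz, if_neg (Ne.symm hwu), if_neg (Ne.symm hwv)]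
        have hcard : g.support.card < N := by
          calc g.support.card ≤ (f.support.erase u).card := Finset.card_le_card hgsupp
            _ < f.support.card := Finset.card_erase_lt_of_mem hu
            _ = N := hn
        have hgspan : g ∈ Ideal.span S := ih g.support.card hcard g rfl hgker
        have : f = g + coeff u f • b := by rw [hg]; ring
        rw [this]
        refine Ideal.add_mem _ hgspan ?_
        rw [MvPolynomial.smul_eq_C_mul]
        exact Ideal.mul_mem_left _ _ (Ideal.subset_span hbS)
  -- span S = ker φ
  have hspan : Ideal.span S = RingHom.ker φ := by
    apply le_antisymm
    · exact Ideal.span_le.mpr hSker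
    · intro f hf
      exact hker' f.support.card f rfl (RingHom.mem_ker.mp hf)
  have hprime : (RingHom.ker φ).IsPrime := RingHom.ker_isPrime φ
  exact ⟨hspan ▸ hprime, hprime⟩
end

section
/- Let k be a field and let Δ be a simplicial complex on the vertex set Fin n, i.e. a nonempty finite family of finite subsets of Fin n that is closed under taking subsets. In S = MvPolynomial (Fin n) k, the Stanley–Reisner ideal I_Δ, generated by the squarefree monomials ∏_{i ∈ τ} X_i over all finite subsets τ ⊆ Fin n with τ ∉ Δ, equals the intersection ⋂_{σ ∈ Δ} ⟨X_i : i ∈ (Fin n) \ σ⟩ of the monomial prime ideals generated by the variables not belonging to a face σ of Δ. -/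
open MvPolynomial Finsupp in
lemma sum_single_le_iff {n : ℕ} (τ : Finset (Fin n)) (m : Fin n →₀ ℕ) :
    (∑ i ∈ τ, Finsupp.single i 1) ≤ m ↔ ∀ i ∈ τ, m i ≠ 0 := by
  rw [Finsupp.le_def]
  constructor
  · intro h i hi
    have := h i
    rw [Finsupp.finset_sum_apply] at this
    have : 1 ≤ m i := le_trans (by
      rw [Finset.sum_eq_single i (fun b _ hb => Finsupp.single_eq_of_ne' hb)
        (fun h => absurd hi h), Finsupp.single_eq_same]) this
    omega
  · intro h j
    rw [Finsupp.finset_sum_apply]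
    by_cases hj : j ∈ τ
    · rw [Finset.sum_eq_single j (fun b _ hb => Finsupp.single_eq_of_ne' hb)
        (fun h => absurd hj h), Finsupp.single_eq_same]
      exact Nat.one_le_iff_ne_zero.2 (h j hj)
    · exact (Finset.sum_eq_zero fun b hb =>
        Finsupp.single_eq_of_ne' (by rintro rfl; exact hj hb)).trans_le (Nat.zero_le _)

open MvPolynomial in
/-- For a simplicial complex `Δ` on the vertex set `Fin n` (a nonempty family of finite subsets
of `Fin n` closed under taking subsets), the Stanley–Reisner ideal, generated by the squarefree
monomials `∏_{i ∈ τ} X i` over the non-faces `τ ∉ Δ`, equals the intersection over the faces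
`σ ∈ Δ` of the monomial prime ideals generated by the variables not in `σ`. -/
theorem stanleyReisner_ideal_eq_inter_monomial_primes (k : Type*) [Field k] (n : ℕ)
    (Δ : Finset (Finset (Fin n))) (hne : Δ.Nonempty)
    (hdown : ∀ σ ∈ Δ, ∀ τ ⊆ σ, τ ∈ Δ) :
    Ideal.span {f : MvPolynomial (Fin n) k |
        ∃ τ : Finset (Fin n), τ ∉ Δ ∧ f = ∏ i ∈ τ, X i} =
      ⨅ σ ∈ Δ, Ideal.span (X '' {i : Fin n | i ∉ σ}) := by
  have hset : {f : MvPolynomial (Fin n) k | ∃ τ : Finset (Fin n), τ ∉ Δ ∧ f = ∏ i ∈ τ, X i}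
      = (fun s => monomial s (1 : k)) ''
        {d : Fin n →₀ ℕ | ∃ τ : Finset (Fin n), τ ∉ Δ ∧ d = ∑ i ∈ τ, Finsupp.single i 1} := by
    ext f
    constructor
    · rintro ⟨τ, hτ, rfl⟩
      exact ⟨∑ i ∈ τ, Finsupp.single i 1, ⟨τ, hτ, rfl⟩,
        by simp only []; rw [monomial_sum_one]; simp [MvPolynomial.X]⟩
    · rintro ⟨d, ⟨τ, hτ, rfl⟩, rfl⟩
      exact ⟨τ, hτ, by simp only []; rw [monomial_sum_one]; simp [MvPolynomial.X]⟩
  rw [hset]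
  ext f
  rw [mem_ideal_span_monomial_image]
  simp only [Ideal.mem_iInf, mem_ideal_span_X_image, Set.mem_setOf_eq]
  constructor
  · intro h σ hσ m hm
    obtain ⟨d, ⟨τ, hτ, rfl⟩, hle⟩ := h m hm
    rw [sum_single_le_iff] at hle
    -- τ ⊄ σ since τ ∉ Δ
    obtain ⟨i, hiτ, hiσ⟩ : ∃ i ∈ τ, i ∉ σ := by
      by_contra hc
      push_neg at hc
      exact hτ (hdown σ hσ τ hc)
    exact ⟨i, hiσ, hle i hiτ⟩
  · intro h m hm
    refine ⟨∑ i ∈ m.support, Finsupp.single i 1, ⟨m.support, ?_, rfl⟩, ?_⟩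
    · intro hc
      obtain ⟨i, hiσ, hi⟩ := h m.support hc m hm
      exact hiσ (Finsupp.mem_support_iff.2 hi)
    · rw [sum_single_le_iff]
      exact fun i hi => Finsupp.mem_support_iff.1 hi
end
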